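/- arXiv:2403.05835 — 2 statements merged into one kernel-verified Lean document; each statement's English description precedes it below -/
import Mathlib

section
/- Let φ_i : L → L' and ψ_i : L' → L'' be simplicial maps (i = 1,…,m) with ψ_i ∼ ψ_{i+1} for all i. Then SD(ψ₁∘φ₁,…,ψ_m∘φ_m) ≤ SD(φ₁,…,φ_m). -/
noncomputable section

/-- An abstract simplicial complex on a vertex type `V`. -/
structure ASC (V : Type) where
  faces : Set (Finset V)
  nonempty_of_mem : ∀ ⦃σ⦄, σ ∈ faces → σ.Nonempty
  down_closed : ∀ ⦃σ⦄, σ ∈ faces → ∀ ⦃τ⦄, τ ⊆ σ → τ.Nonempty → τ ∈ faces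

/-- A simplicial map between abstract simplicial complexes. -/
structure SMap {V W : Type} [DecidableEq W] (K : ASC V) (L : ASC W) where
  toFun : V → W
  map_faces : ∀ ⦃σ⦄, σ ∈ K.faces → σ.image toFun ∈ L.faces

/-- The identity simplicial map. -/
def SMap.id {V : Type} [DecidableEq V] (K : ASC V) : SMap K K :=
  ⟨fun v => v, fun σ hσ => by simpa using hσ⟩

/-- Composition of simplicial maps. -/
def SMap.comp {U V W : Type} [DecidableEq V] [DecidableEq W]
    {K : ASC U} {L : ASC V} {M : ASC W}
    (g : SMap L M) (f : SMap K L) : SMap K M :=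
  ⟨g.toFun ∘ f.toFun, fun σ hσ => by
    rw [show σ.image (g.toFun ∘ f.toFun) = (σ.image f.toFun).image g.toFun by
      simp [Finset.image_image]]
    exact g.map_faces (f.map_faces hσ)⟩

/-- Two simplicial maps are contiguous if the union of the images of every
simplex is a simplex of the codomain. -/
def Contiguous {V W : Type} [DecidableEq W] {K : ASC V} {L : ASC W}
    (f g : SMap K L) : Prop :=
  ∀ ⦃σ⦄, σ ∈ K.faces → σ.image f.toFun ∪ σ.image g.toFun ∈ L.faces

/-- Two simplicial maps are in the same contiguity class if they are joined by
a finite chain of pairwise contiguous simplicial maps. -/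
def ContigClass {V W : Type} [DecidableEq W] {K : ASC V} {L : ASC W}
    (f g : SMap K L) : Prop :=
  Relation.ReflTransGen Contiguous f g

/-- `N` is a subcomplex of `K`. -/
def IsSubcomplex {V : Type} (N K : ASC V) : Prop :=
  N.faces ⊆ K.faces

/-- Restriction of a simplicial map to a subcomplex. -/
def SMap.restrict {V W : Type} [DecidableEq W] {N K : ASC V} {L : ASC W}
    (h : IsSubcomplex N K) (f : SMap K L) : SMap N L :=
  ⟨f.toFun, fun _ hσ => f.map_faces (h hσ)⟩

/-- `SDcover φ n` : the domain is covered by `n+1` subcomplexes on each of which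
all restrictions of the maps `φ i` are pairwise in the same contiguity class. -/
def SDcover {V W : Type} [DecidableEq W] {K : ASC V} {L : ASC W} {m : ℕ}
    (φ : Fin m → SMap K L) (n : ℕ) : Prop :=
  ∃ (Ls : Fin (n + 1) → ASC V) (h : ∀ k, IsSubcomplex (Ls k) K),
    (∀ σ ∈ K.faces, ∃ k, σ ∈ (Ls k).faces) ∧
    ∀ k i j, ContigClass (SMap.restrict (h k) (φ i)) (SMap.restrict (h k) (φ j))

/-- The higher contiguity distance `SD(φ₁, …, φ_m)` as a value in `ℕ∞`. -/
def SD {V W : Type} [DecidableEq W] {K : ASC V} {L : ASC W} {m : ℕ}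
    (φ : Fin m → SMap K L) : ℕ∞ :=
  sInf {N : ℕ∞ | ∃ n : ℕ, N = n ∧ SDcover φ n}

/-- The `n`-fold categorical power of a simplicial complex. -/
def ASC.pow {V : Type} [DecidableEq V] (K : ASC V) (n : ℕ) : ASC (Fin n → V) where
  faces := {σ | σ.Nonempty ∧ ∀ i, σ.image (fun v => v i) ∈ K.faces}
  nonempty_of_mem := fun _ hσ => hσ.1
  down_closed := fun σ hσ τ hτσ hτ =>
    ⟨hτ, fun i => K.down_closed (hσ.2 i)
      (Finset.image_subset_image (f := fun v => v i) hτσ) (hτ.image _)⟩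

/-- The `i`-th projection from the `n`-fold categorical power. -/
def ASC.proj {V : Type} [DecidableEq V] (K : ASC V) (n : ℕ) (i : Fin n) :
    SMap (K.pow n) K :=
  ⟨fun v => v i, fun _ hσ => hσ.2 i⟩

/-- The power of a simplicial map. -/
def SMap.pow {V W : Type} [DecidableEq V] [DecidableEq W] {K : ASC V} {L : ASC W}
    (f : SMap K L) (n : ℕ) : SMap (K.pow n) (L.pow n) :=
  ⟨fun v i => f.toFun (v i), fun σ hσ => by
    obtain ⟨h1, h2⟩ := hσ
    refine ⟨h1.image _, fun i => ?_⟩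
    have hf := f.map_faces (h2 i)
    rw [Finset.image_image] at hf ⊢
    exact hf⟩

/-- The higher discrete topological complexity `TC_n(K)`. -/
def TCn {V : Type} [DecidableEq V] (K : ASC V) (n : ℕ) : ℕ∞ :=
  SD (fun i : Fin n => K.proj n i)

/-- The higher discrete topological complexity of a simplicial map. -/
def TCnMap {V W : Type} [DecidableEq V] [DecidableEq W] {K : ASC V} {L : ASC W}
    (φ : SMap K L) (n : ℕ) : ℕ∞ :=
  SD (fun i : Fin n => φ.comp (K.proj n i))

/-- The binary categorical product of two simplicial complexes. -/
def ASC.prod {V W : Type} [DecidableEq V] [DecidableEq W]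
    (K : ASC V) (L : ASC W) : ASC (V × W) where
  faces := {σ | σ.Nonempty ∧ σ.image Prod.fst ∈ K.faces ∧ σ.image Prod.snd ∈ L.faces}
  nonempty_of_mem := fun _ hσ => hσ.1
  down_closed := fun σ hσ τ hτσ hτ =>
    ⟨hτ, K.down_closed hσ.2.1 (Finset.image_subset_image hτσ) (hτ.image _),
      L.down_closed hσ.2.2 (Finset.image_subset_image hτσ) (hτ.image _)⟩

/-- The path complex `I_m` : vertices `0, …, m`, maximal simplices `{i, i+1}`. -/
def pathComplex (m : ℕ) : ASC (Fin (m + 1)) where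
  faces := {σ | σ.Nonempty ∧ ∃ i : ℕ, ∀ j ∈ σ, (j : ℕ) = i ∨ (j : ℕ) = i + 1}
  nonempty_of_mem := fun _ hσ => hσ.1
  down_closed := fun _ hσ _ hτσ hτ =>
    ⟨hτ, hσ.2.imp fun _ h => fun j hj => h j (hτσ hj)⟩

/-- Two simplicial complexes have the same strong homotopy type. -/
def StrongHomotopyType {V W : Type} [DecidableEq V] [DecidableEq W]
    (K : ASC V) (L : ASC W) : Prop :=
  ∃ (f : SMap K L) (g : SMap L K),
    ContigClass (g.comp f) (SMap.id K) ∧ ContigClass (f.comp g) (SMap.id L)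

/-- The one-point simplicial complex. -/
def ptASC : ASC Unit where
  faces := {σ | σ.Nonempty}
  nonempty_of_mem := fun _ hσ => hσ
  down_closed := fun _ _ _ _ hτ => hτ

/-- A simplicial complex is strongly collapsible if it has the strong homotopy
type of a point. -/
def StronglyCollapsible {V : Type} [DecidableEq V] (K : ASC V) : Prop :=
  StrongHomotopyType K ptASC

/-- The inclusion `N → N × I_m` at level `0`. -/
def inclZero {V : Type} [DecidableEq V] (N : ASC V) (m : ℕ) :
    SMap N (N.prod (pathComplex m)) :=
  ⟨fun v => (v, 0), fun σ hσ => by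
    refine ⟨(N.nonempty_of_mem hσ).image _, ?_, ?_⟩
    · rw [Finset.image_image, show (Prod.fst ∘ fun v : V => (v, (0 : Fin (m + 1))))
        = fun v => v from rfl, Finset.image_id']
      exact hσ
    · rw [Finset.image_image]
      refine ⟨(N.nonempty_of_mem hσ).image _, 0, fun j hj => ?_⟩
      simp only [Finset.mem_image, Function.comp] at hj
      obtain ⟨v, -, rfl⟩ := hj
      simp⟩

/-- A simplicial finite-fibration : the homotopy lifting property with respect
to simplicial homotopies `N × I_m → L'` with `N` finite. -/
def IsFiniteFibration {V W : Type} [DecidableEq V] [DecidableEq W]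
    {K : ASC V} {L : ASC W} (φ : SMap K L) : Prop :=
  ∀ (U : Type) [Fintype U] [DecidableEq U] (N : ASC U) (m : ℕ) (g : SMap N K)
    (G : SMap (N.prod (pathComplex m)) L),
    (∀ v, G.toFun (v, 0) = φ.toFun (g.toFun v)) →
    ∃ Gt : SMap (N.prod (pathComplex m)) K,
      (∀ v, Gt.toFun (v, 0) = g.toFun v) ∧ (∀ x, φ.toFun (Gt.toFun x) = G.toFun x)

/-- The constant simplicial map at a vertex `v₀` of `L`. -/
def constMap {V W : Type} [DecidableEq W] (K : ASC V) {L : ASC W} {v₀ : W}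
    (hv₀ : {v₀} ∈ L.faces) : SMap K L :=
  ⟨fun _ => v₀, fun σ hσ => by
    have hsub : σ.image (fun _ => v₀) ⊆ {v₀} := by
      intro x hx
      simp only [Finset.mem_image] at hx
      obtain ⟨v, -, rfl⟩ := hx
      simp
    exact L.down_closed hv₀ hsub ((K.nonempty_of_mem hσ).image _)⟩

/-- A simplicial map is a strong equivalence if it admits an inverse up to
contiguity class. -/
def IsStrongEquiv {V W : Type} [DecidableEq V] [DecidableEq W]
    {K : ASC V} {L : ASC W} (f : SMap K L) : Prop :=
  ∃ g : SMap L K,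
    ContigClass (g.comp f) (SMap.id K) ∧ ContigClass (f.comp g) (SMap.id L)

section Aux
variable {U V W : Type} [DecidableEq V] [DecidableEq W]

theorem Contiguous.symm' {K : ASC U} {L : ASC V} {f g : SMap K L}
    (h : Contiguous f g) : Contiguous g f := fun σ hσ => by
  rw [Finset.union_comm]; exact h hσ

theorem ContigClass.symm' {K : ASC U} {L : ASC V} {f g : SMap K L}
    (h : ContigClass f g) : ContigClass g f := by
  induction h with
  | refl => exact Relation.ReflTransGen.refl
  | tail _ hc ih => exact Relation.ReflTransGen.head hc.symm' ih

theorem Contiguous.post {K : ASC U} {L : ASC V} {M : ASC W}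
    {f g : SMap K L} (ψ : SMap L M) (h : Contiguous f g) :
    Contiguous (ψ.comp f) (ψ.comp g) := fun σ hσ => by
  have : σ.image (ψ.comp f).toFun ∪ σ.image (ψ.comp g).toFun
      = (σ.image f.toFun ∪ σ.image g.toFun).image ψ.toFun := by
    simp [SMap.comp, Finset.image_union, Finset.image_image]
  rw [this]; exact ψ.map_faces (h hσ)

theorem ContigClass.post {K : ASC U} {L : ASC V} {M : ASC W}
    {f g : SMap K L} (ψ : SMap L M) (h : ContigClass f g) :
    ContigClass (ψ.comp f) (ψ.comp g) := by
  induction h with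
  | refl => exact Relation.ReflTransGen.refl
  | tail _ hc ih => exact Relation.ReflTransGen.tail ih (hc.post ψ)

theorem Contiguous.pre {K : ASC U} {L : ASC V} {M : ASC W}
    {ψ χ : SMap L M} (h : Contiguous ψ χ) (f : SMap K L) :
    Contiguous (ψ.comp f) (χ.comp f) := fun σ hσ => by
  have : σ.image (ψ.comp f).toFun ∪ σ.image (χ.comp f).toFun
      = (σ.image f.toFun).image ψ.toFun ∪ (σ.image f.toFun).image χ.toFun := by
    simp [SMap.comp, Finset.image_image]
  rw [this]; exact h (f.map_faces hσ)

theorem ContigClass.pre {K : ASC U} {L : ASC V} {M : ASC W}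
    {ψ χ : SMap L M} (h : ContigClass ψ χ) (f : SMap K L) :
    ContigClass (ψ.comp f) (χ.comp f) := by
  induction h with
  | refl => exact Relation.ReflTransGen.refl
  | tail _ hc ih => exact Relation.ReflTransGen.tail ih (hc.pre f)

theorem contigClass_psi {L' : ASC V} {L'' : ASC W} {m : ℕ}
    (psi : Fin m → SMap L' L'')
    (hchain : ∀ (i : ℕ) (h : i + 1 < m),
      ContigClass (psi ⟨i, Nat.lt_of_succ_lt h⟩) (psi ⟨i + 1, h⟩)) :
    ∀ i j : Fin m, ContigClass (psi i) (psi j) := by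
  have step : ∀ (a b : ℕ) (hb : b < m) (hab : a ≤ b),
      ContigClass (psi ⟨a, lt_of_le_of_lt hab hb⟩) (psi ⟨b, hb⟩) := by
    intro a b hb hab
    induction hab with
    | refl => exact Relation.ReflTransGen.refl
    | @step c hac ih =>
      exact (ih (Nat.lt_of_succ_lt hb)).trans (hchain c hb)
  intro i j
  rcases le_total (i : ℕ) (j : ℕ) with h | h
  · have := step i j j.isLt h; simpa using this
  · have := step j i i.isLt h; simpa using this.symm'
end Aux

/-- `SD(ψ₁∘φ₁,…,ψ_m∘φ_m) ≤ SD(φ₁,…,φ_m)` when the `ψ_i` form a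
chain of maps in the same contiguity class. -/
theorem SD_postcomp_le
    {U V W : Type} [DecidableEq V] [DecidableEq W]
    {L : ASC U} {L' : ASC V} {L'' : ASC W} {m : ℕ}
    (phi : Fin m → SMap L L') (psi : Fin m → SMap L' L'')
    (hchain : ∀ (i : ℕ) (h : i + 1 < m),
      ContigClass (psi ⟨i, Nat.lt_of_succ_lt h⟩) (psi ⟨i + 1, h⟩)) :
    SD (fun i => (psi i).comp (phi i)) ≤ SD phi := by
  apply sInf_le_sInf
  rintro N ⟨n, rfl, Ls, hsub, hcov, hctg⟩
  refine ⟨n, rfl, Ls, hsub, hcov, fun k i j => ?_⟩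
  have h1 : SMap.restrict (hsub k) ((psi i).comp (phi i))
      = (psi i).comp (SMap.restrict (hsub k) (phi i)) := rfl
  have h2 : SMap.restrict (hsub k) ((psi j).comp (phi j))
      = (psi j).comp (SMap.restrict (hsub k) (phi j)) := rfl
  rw [h1, h2]
  exact ((hctg k i j).post (psi i)).trans
    ((contigClass_psi psi hchain i j).pre _)
end
end

section
/- If simplicial complexes L and N have the same strong homotopy type, then TC_n(L) = TC_n(N), where TC_n(L) = SD(p₁,…,p_n) for the n projection maps p_i : L^n → L from the categorical product. -/
noncomputable section

section Aux

variable {U' V W X : Type}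

theorem contiguous_symm [DecidableEq W] {K : ASC V} {L : ASC W}
    {f g : SMap K L} (h : Contiguous f g) : Contiguous g f := by
  intro σ hσ
  have := h hσ
  rwa [Finset.union_comm] at this

theorem contigClass_symm [DecidableEq W] {K : ASC V} {L : ASC W}
    {f g : SMap K L} (h : ContigClass f g) : ContigClass g f := by
  induction h with
  | refl => exact Relation.ReflTransGen.refl
  | tail _ hc ih => exact Relation.ReflTransGen.head (contiguous_symm hc) ih

theorem contiguous_precomp [DecidableEq V] [DecidableEq W]
    {K' : ASC U'} {K : ASC V} {L : ASC W} {f g : SMap K L}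
    (h : Contiguous f g) (e : SMap K' K) :
    Contiguous (f.comp e) (g.comp e) := by
  intro σ hσ
  have h1 : σ.image (f.comp e).toFun = (σ.image e.toFun).image f.toFun := by
    simp [SMap.comp, Finset.image_image]
  have h2 : σ.image (g.comp e).toFun = (σ.image e.toFun).image g.toFun := by
    simp [SMap.comp, Finset.image_image]
  rw [h1, h2]
  exact h (e.map_faces hσ)

theorem contigClass_precomp [DecidableEq V] [DecidableEq W]
    {K' : ASC U'} {K : ASC V} {L : ASC W} {f g : SMap K L}
    (h : ContigClass f g) (e : SMap K' K) :
    ContigClass (f.comp e) (g.comp e) := by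
  induction h with
  | refl => exact Relation.ReflTransGen.refl
  | tail _ hc ih => exact Relation.ReflTransGen.tail ih (contiguous_precomp hc e)

theorem contiguous_postcomp [DecidableEq W] [DecidableEq X]
    {K : ASC V} {L : ASC W} {M : ASC X} {f g : SMap K L}
    (h : Contiguous f g) (e : SMap L M) :
    Contiguous (e.comp f) (e.comp g) := by
  intro σ hσ
  have h1 : σ.image (e.comp f).toFun ∪ σ.image (e.comp g).toFun
      = (σ.image f.toFun ∪ σ.image g.toFun).image e.toFun := by
    simp [SMap.comp, Finset.image_image, Finset.image_union]
  rw [h1]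
  exact e.map_faces (h hσ)

theorem contigClass_postcomp [DecidableEq W] [DecidableEq X]
    {K : ASC V} {L : ASC W} {M : ASC X} {f g : SMap K L}
    (h : ContigClass f g) (e : SMap L M) :
    ContigClass (e.comp f) (e.comp g) := by
  induction h with
  | refl => exact Relation.ReflTransGen.refl
  | tail _ hc ih => exact Relation.ReflTransGen.tail ih (contiguous_postcomp hc e)

/-- The preimage subcomplex. -/
def preimg [DecidableEq W] (K : ASC V) (φ : V → W) (M : ASC W) : ASC V where
  faces := {σ | σ ∈ K.faces ∧ σ.image φ ∈ M.faces}
  nonempty_of_mem := fun _ hσ => K.nonempty_of_mem hσ.1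
  down_closed := fun σ hσ τ hτσ hτ =>
    ⟨K.down_closed hσ.1 hτσ hτ,
      M.down_closed hσ.2 (Finset.image_subset_image hτσ) (hτ.image _)⟩

theorem preimg_sub [DecidableEq W] (K : ASC V) (φ : V → W) (M : ASC W) :
    IsSubcomplex (preimg K φ M) K := fun _ hσ => hσ.1

theorem SDcover_mono {m : ℕ} [DecidableEq V] [DecidableEq W]
    {L : ASC V} {N : ASC W} (n : ℕ)
    (f : SMap L N) (g : SMap N L)
    (hgf : ContigClass (g.comp f) (SMap.id L))
    (hc : SDcover (fun i : Fin m => N.proj m i) n) :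
    SDcover (fun i : Fin m => L.proj m i) n := by
  obtain ⟨Ms, hMs, hcov, hcl⟩ := hc
  refine ⟨fun k => preimg (L.pow m) (f.pow m).toFun (Ms k),
    fun k => preimg_sub _ _ _, ?_, ?_⟩
  · intro σ hσ
    obtain ⟨k, hk⟩ := hcov _ ((f.pow m).map_faces hσ)
    exact ⟨k, hσ, hk⟩
  · intro k i j
    -- the restriction of `f.pow m` to the preimage subcomplex
    set Lk := preimg (L.pow m) (f.pow m).toFun (Ms k) with hLk
    have hsub : IsSubcomplex Lk (L.pow m) := preimg_sub _ _ _
    set fk : SMap Lk (Ms k) := ⟨(f.pow m).toFun, fun σ hσ => hσ.2⟩ with hfk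
    have h1 : ∀ i : Fin m,
        ContigClass (SMap.restrict hsub (L.proj m i))
          (g.comp ((SMap.restrict (hMs k) (N.proj m i)).comp fk)) := by
      intro i
      have := contigClass_precomp hgf (SMap.restrict hsub (L.proj m i))
      have h2 : (SMap.id L).comp (SMap.restrict hsub (L.proj m i))
          = SMap.restrict hsub (L.proj m i) := rfl
      have h3 : (g.comp f).comp (SMap.restrict hsub (L.proj m i))
          = g.comp ((SMap.restrict (hMs k) (N.proj m i)).comp fk) := rfl
      rw [h2, h3] at this
      exact contigClass_symm this
    have hmid : ContigClass
        (g.comp ((SMap.restrict (hMs k) (N.proj m i)).comp fk))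
        (g.comp ((SMap.restrict (hMs k) (N.proj m j)).comp fk)) :=
      contigClass_postcomp (contigClass_precomp (hcl k i j) fk) g
    exact Relation.ReflTransGen.trans (h1 i)
      (Relation.ReflTransGen.trans hmid (contigClass_symm (h1 j)))

theorem TCn_le {V W : Type} [DecidableEq V] [DecidableEq W] {L : ASC V} {N : ASC W}
    (f : SMap L N) (g : SMap N L)
    (hgf : ContigClass (g.comp f) (SMap.id L)) (n : ℕ) :
    TCn L n ≤ TCn N n := by
  apply sInf_le_sInf
  rintro x ⟨k, rfl, hk⟩
  exact ⟨k, rfl, SDcover_mono k f g hgf hk⟩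

end Aux
/-- `TC_n` is an invariant of strong homotopy type. -/
theorem TCn_strong_homotopy_invariant
    {V W : Type} [DecidableEq V] [DecidableEq W] {L : ASC V} {N : ASC W}
    (h : StrongHomotopyType L N) (n : ℕ) :
    TCn L n = TCn N n := by
  obtain ⟨f, g, hgf, hfg⟩ := h
  exact le_antisymm (TCn_le f g hgf n) (TCn_le g f hfg n)
end
end
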